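/- max over x ∈ [0,1] of |T₂(x)| equals 1/40, where T₂(x) = x²/2 - 7x/30 + 1/60 for x ∈ [0,1/2) and T₂(x) = x²/2 - 23x/30 + 17/60 for x ∈ [1/2,1]. -/
import Mathlib


theorem T2_abs_max :
    IsGreatest ((fun x : ℝ =>
      |if x < 1/2 then x ^ 2 / 2 - 7 * x / 30 + 1 / 60
        else x ^ 2 / 2 - 23 * x / 30 + 17 / 60|) '' Set.Icc 0 1) (1 / 40) := by
  constructor
  · refine ⟨1/2, ⟨by norm_num, by norm_num⟩, ?_⟩
    norm_num
  · rintro y ⟨x, ⟨hx0, hx1⟩, rfl⟩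
    simp only
    rw [abs_le]
    split_ifs with h
    · constructor
      · nlinarith [sq_nonneg (x - 7/30)]
      · nlinarith [mul_nonneg (by linarith : (0:ℝ) ≤ 1/2 - x) (by linarith : (0:ℝ) ≤ x + 1/30)]
    · push_neg at h
      constructor
      · nlinarith [sq_nonneg (x - 23/30)]
      · nlinarith [mul_nonneg (by linarith : (0:ℝ) ≤ x - 1/2) (by linarith : (0:ℝ) ≤ 31/30 - x)]
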